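/- For every permutation σ of {1, …, k}, either σ or σ⁺ = (σ_1+1, …, σ_k+1) occurs as an exact subsequence of the zigzag word zz(k, k+1). -/

import Mathlib

/-- The `j`-th run of the zigzag word over alphabet `{1, …, q}`: for odd `j` the odd
numbers in increasing order, for even `j` the even numbers in decreasing order. -/
def zrun (j q : ℕ) : List ℕ :=
  if j % 2 = 1 then (List.range (q + 1)).filter (fun n => n % 2 = 1)
  else ((List.range (q + 1)).filter (fun n => n % 2 = 0 && n != 0)).reverse

/-- The zigzag word `zz(m, q) = R₁ R₂ ⋯ R_m`. -/
def zz (m q : ℕ) : List ℕ := ((List.range m).map fun j => zrun (j + 1) q).flatten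

namespace ZZaux

/-- Run-index increment when going from letter `a` to letter `b`. -/
def step (a b : ℕ) : ℕ :=
  if b % 2 ≠ a % 2 then 1
  else if a % 2 = 1 then (if a < b then 0 else 2)
  else (if b < a then 0 else 2)

/-- Total run-index increment along a word with previous letter `a`. -/
def inc : ℕ → List ℕ → ℕ
  | _, [] => 0
  | a, b :: w => step a b + inc b w

/-- Greedy block decomposition of `a :: w` into runs. -/
def blocks : ℕ → List ℕ → List (List ℕ)
  | a, [] => [[a]]
  | a, b :: w =>
    if step a b = 0 then
      match blocks b w with
      | [] => [[a]]
      | B :: tl => (a :: B) :: tl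
    else if step a b = 1 then [a] :: blocks b w
    else [a] :: [] :: blocks b w

lemma blocks_head (a : ℕ) (w : List ℕ) : ∃ B tl, blocks a w = (a :: B) :: tl := by
  cases w with
  | nil => exact ⟨[], [], rfl⟩
  | cons b w =>
    by_cases h0 : step a b = 0
    · rcases hbw : blocks b w with _ | ⟨B, tl⟩
      · exact ⟨[], [], by simp [blocks, h0, hbw]⟩
      · exact ⟨B, tl, by simp [blocks, h0, hbw]⟩
    · by_cases h1 : step a b = 1
      · exact ⟨[], blocks b w, by simp [blocks, h0, h1]⟩
      · exact ⟨[], [] :: blocks b w, by simp [blocks, h0, h1]⟩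

lemma flatten_blocks : ∀ (w : List ℕ) (a : ℕ), (blocks a w).flatten = a :: w := by
  intro w
  induction w with
  | nil => intro a; simp [blocks]
  | cons b w ih =>
    intro a
    by_cases h0 : step a b = 0
    · obtain ⟨B, tl, hbw⟩ := blocks_head b w
      have := ih b
      rw [hbw] at this
      simp only [blocks, h0, if_pos, hbw]
      simpa using this
    · by_cases h1 : step a b = 1
      · simp [blocks, h0, h1, ih b]
      · simp [blocks, h0, h1, ih b]

lemma length_blocks : ∀ (w : List ℕ) (a : ℕ), (blocks a w).length = 1 + inc a w := by
  intro w
  induction w with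
  | nil => intro a; simp [blocks, inc]
  | cons b w ih =>
    intro a
    by_cases h0 : step a b = 0
    · obtain ⟨B, tl, hbw⟩ := blocks_head b w
      have := ih b
      rw [hbw] at this
      simp only [blocks, h0, if_pos, hbw, inc]
      simp at this ⊢
      omega
    · by_cases h1 : step a b = 1
      · simp [blocks, h0, h1, inc, ih b]; omega
      · have h2 : step a b = 2 := by unfold step at *; split_ifs at * <;> omega
        simp [blocks, h0, h1, inc, ih b, h2]; omega

lemma sublist_of_notmem {α : Type*} {l O : List α} {o : α}
    (h : l.Sublist (o :: O)) (ho : o ∉ l) : l.Sublist O := by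
  cases h with
  | cons _ h => exact h
  | cons_cons _ h => simp at ho

/-- Insertion of a minimal element in front of a sublist of a sorted list. -/
lemma ins {r : ℕ → ℕ → Prop} (hasymm : ∀ x y, r x y → r y x → False) :
    ∀ {O l : List ℕ} {a : ℕ}, O.Pairwise r → a ∈ O →
      l.Sublist O → (∀ x ∈ l, r a x) → (a :: l).Sublist O := by
  intro O
  induction O with
  | nil => intro l a _ ha; simp at ha
  | cons o O ih =>
    intro l a hO ha hl hrel
    rcases List.mem_cons.mp ha with rfl | ha
    · have ho : a ∉ l := fun h => hasymm a a (hrel a h) (hrel a h)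
      exact List.Sublist.cons₂ a (sublist_of_notmem hl ho)
    · have hoa : r o a := (List.pairwise_cons.mp hO).1 a ha
      have ho : o ∉ l := fun h => hasymm a o (hrel o h) hoa
      have hl' : l.Sublist O := sublist_of_notmem hl ho
      exact List.Sublist.cons o (ih (List.pairwise_cons.mp hO).2 ha hl' hrel)

lemma mem_zrun {a r q : ℕ} (hp : a % 2 = r % 2) (h1 : 1 ≤ a) (hq : a ≤ q) :
    a ∈ zrun r q := by
  unfold zrun
  by_cases hr : r % 2 = 1 <;> simp [hr, List.mem_filter, List.mem_range] <;> omega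

lemma zrun_pairwise_odd {r q : ℕ} (hr : r % 2 = 1) :
    (zrun r q).Pairwise (· < ·) := by
  unfold zrun
  rw [if_pos hr]
  exact (List.pairwise_lt_range (n := q + 1)).filter _

lemma zrun_pairwise_even {r q : ℕ} (hr : ¬ r % 2 = 1) :
    (zrun r q).Pairwise (· > ·) := by
  unfold zrun
  rw [if_neg hr]
  rw [List.pairwise_reverse]
  exact (List.pairwise_lt_range (n := q + 1)).filter _

lemma blk (q : ℕ) : ∀ (w : List ℕ) (a r : ℕ), a % 2 = r % 2 → 1 ≤ a → a ≤ q →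
    (∀ x ∈ w, 1 ≤ x ∧ x ≤ q) →
    List.Forall₂ (fun B j => B.Sublist (zrun j q)) (blocks a w)
      (List.range' r (1 + inc a w)) := by
  intro w
  induction w with
  | nil =>
    intro a r hp h1 hq _
    simp only [blocks, inc, List.range'_succ]
    simp only [List.range'_zero]
    exact List.Forall₂.cons (by simpa using mem_zrun hp h1 hq) List.Forall₂.nil
  | cons b w ih =>
    intro a r hp h1 hq hw
    have hb1 : 1 ≤ b := (hw b (by simp)).1
    have hbq : b ≤ q := (hw b (by simp)).2
    have hw' : ∀ x ∈ w, 1 ≤ x ∧ x ≤ q := fun x hx => hw x (by simp [hx])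
    by_cases h0 : step a b = 0
    · -- same parity, fits in same run
      have hparity : b % 2 = a % 2 := by
        unfold step at h0; split_ifs at h0 <;> omega
      obtain ⟨B, tl, hbw⟩ := blocks_head b w
      have IH := ih b r (hparity.trans hp) hb1 hbq hw'
      rw [hbw] at IH
      have hinc : inc a (b :: w) = inc b w := by simp [inc, h0]
      have hn : 1 + inc b w = inc b w + 1 := Nat.add_comm _ _
      rw [hn, List.range'_succ] at IH
      rcases IH with _ | ⟨hB, htl⟩
      simp only [blocks, h0, if_pos, hbw, hinc, hn, List.range'_succ]
      refine List.Forall₂.cons ?_ htl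
      -- (a :: b :: B).Sublist (zrun r q)
      by_cases hr : r % 2 = 1
      · have hsorted := zrun_pairwise_odd (q := q) hr
        have hab : a < b := by
          unfold step at h0
          split_ifs at h0 <;> omega
        have hBs : (b :: B).Pairwise (· < ·) := hsorted.sublist hB
        refine ins (fun x y h1 h2 => by omega) hsorted
          (mem_zrun hp h1 hq) hB ?_
        intro x hx
        rcases List.mem_cons.mp hx with rfl | hx
        · exact hab
        · exact hab.trans ((List.pairwise_cons.mp hBs).1 x hx)
      · have hsorted := zrun_pairwise_even (q := q) (r := r) hr
        have hab : b < a := by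
          unfold step at h0
          split_ifs at h0 <;> omega
        have hBs : (b :: B).Pairwise (· > ·) := hsorted.sublist hB
        refine ins (fun x y h1 h2 => by omega) hsorted
          (mem_zrun hp h1 hq) hB ?_
        intro x hx
        rcases List.mem_cons.mp hx with rfl | hx
        · exact hab
        · exact lt_trans ((List.pairwise_cons.mp hBs).1 x hx) hab
    · by_cases hpar : b % 2 = a % 2
      · -- step = 2
        have h2 : step a b = 2 := by unfold step at *; split_ifs at * <;> omega
        have hinc : inc a (b :: w) = 2 + inc b w := by simp [inc, h2]
        have IH := ih b (r + 2) (by omega) hb1 hbq hw'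
        simp only [blocks, h0, h2, hinc]
        have : (1 : ℕ) + (2 + inc b w) = ((1 + inc b w) + 1) + 1 := by ring
        rw [this, List.range'_succ, List.range'_succ]
        refine List.Forall₂.cons (by simpa using mem_zrun hp h1 hq) ?_
        refine List.Forall₂.cons (List.nil_sublist _) ?_
        exact IH
      · -- step = 1
        have h1' : step a b = 1 := by unfold step; simp [hpar]
        have hinc : inc a (b :: w) = 1 + inc b w := by simp [inc, h1']
        have IH := ih b (r + 1) (by omega) hb1 hbq hw'
        simp only [blocks, h0, h1', hinc]
        have : (1 : ℕ) + (1 + inc b w) = (1 + inc b w) + 1 := by ring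
        rw [this, List.range'_succ]
        refine List.Forall₂.cons (by simpa using mem_zrun hp h1 hq) IH

lemma forall₂_flatten {Bs Rs : List (List ℕ)} (h : List.Forall₂ List.Sublist Bs Rs) :
    Bs.flatten.Sublist Rs.flatten := by
  induction h with
  | nil => simp
  | cons h _ ih => simpa using h.append ih

lemma flatten_map_sublist {L₁ L₂ : List ℕ} (h : L₁.Sublist L₂) (f : ℕ → List ℕ) :
    (L₁.map f).flatten.Sublist ((L₂.map f).flatten) := by
  induction h with
  | slnil => simp
  | cons a h ih =>
    simp only [List.map_cons, List.flatten_cons]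
    exact ih.trans (List.sublist_append_right _ _)
  | cons_cons a h ih =>
    simp only [List.map_cons, List.flatten_cons]
    exact (List.Sublist.refl _).append ih

lemma range'_sub {r n m : ℕ} (h1 : 1 ≤ r) (h2 : r + n ≤ m + 1) :
    (List.range' r n).Sublist (List.range' 1 m) := by
  have heq : List.range' 1 m = List.range' 1 (r - 1) ++ List.range' r (m - (r - 1)) := by
    have := List.range'_append (s := 1) (m := r - 1) (n := m - (r - 1)) (step := 1)
    rw [show 1 + 1 * (r - 1) = r by omega] at this
    rw [show r - 1 + (m - (r - 1)) = m by omega] at this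
    exact this.symm
  rw [heq]
  have : (List.range' r n).Sublist (List.range' r (m - (r - 1))) :=
    List.range'_sublist_right.mpr (by omega)
  exact this.trans (List.sublist_append_right _ _)

lemma zz_eq (m q : ℕ) : zz m q = ((List.range' 1 m).map fun j => zrun j q).flatten := by
  rw [zz, List.range'_eq_map_range, List.map_map]
  congr 1
  apply List.map_congr_left
  intro x _
  simp [Nat.add_comm]

lemma emb {q m a : ℕ} {w : List ℕ} {r : ℕ} (hr : 1 ≤ r) (hp : a % 2 = r % 2)
    (ha1 : 1 ≤ a) (haq : a ≤ q) (hw : ∀ x ∈ w, 1 ≤ x ∧ x ≤ q)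
    (hm : r + inc a w ≤ m) : (a :: w).Sublist (zz m q) := by
  have h2 := blk q w a r hp ha1 haq hw
  have h3 : (blocks a w).flatten.Sublist
      (((List.range' r (1 + inc a w)).map fun j => zrun j q)).flatten := by
    apply forall₂_flatten
    rw [List.forall₂_map_right_iff]
    exact h2
  rw [flatten_blocks] at h3
  refine h3.trans ?_
  rw [zz_eq]
  exact flatten_map_sublist (range'_sub hr (by omega)) _

lemma step_add {a b : ℕ} (hab : a ≠ b) : step a b + step (a + 1) (b + 1) = 2 := by
  unfold step
  split_ifs <;> omega

lemma inc_add : ∀ (w : List ℕ) (a : ℕ), List.Chain' (· ≠ ·) (a :: w) →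
    inc a w + inc (a + 1) (w.map (· + 1)) = 2 * w.length := by
  intro w
  induction w with
  | nil => intro a _; simp [inc]
  | cons b w ih =>
    intro a h
    simp only [List.Chain', List.isChain_cons_cons] at h
    have := ih b h.2
    have hs := step_add h.1
    simp only [inc, List.map_cons, List.length_cons]
    omega

end ZZaux

open ZZaux in
/-- For every permutation `σ` of `{1, …, k}`, either `σ` or `σ⁺ = (σ₁+1, …, σ_k+1)`
occurs as an exact subsequence of `zz(k, k+1)`. -/
theorem self_or_lift_sublist_zz (k : ℕ) (l : List ℕ)
    (hl : l.Perm ((List.range k).map (· + 1))) :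
    l.Sublist (zz k (k + 1)) ∨ (l.map (· + 1)).Sublist (zz k (k + 1)) := by
  rcases l with _ | ⟨a, w⟩
  · left; exact List.nil_sublist _
  · have hlen : w.length + 1 = k := by
      have := hl.length_eq
      simpa using this
    have hmem : ∀ x ∈ a :: w, 1 ≤ x ∧ x ≤ k := by
      intro x hx
      have := hl.subset hx
      simp only [List.mem_map, List.mem_range] at this
      omega
    have hnd : (a :: w).Nodup := by
      refine hl.nodup_iff.mpr ?_
      exact (List.nodup_range (n := k)).map (fun x y => by omega)
    have hch : List.Chain' (· ≠ ·) (a :: w) := hnd.isChain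
    have hsum := inc_add w a hch
    have ha1 : 1 ≤ a := (hmem a (by simp)).1
    have hak : a ≤ k := (hmem a (by simp)).2
    have hw : ∀ x ∈ w, 1 ≤ x ∧ x ≤ k + 1 := by
      intro x hx; have := hmem x (by simp [hx]); omega
    have hw' : ∀ x ∈ w.map (· + 1), 1 ≤ x ∧ x ≤ k + 1 := by
      intro x hx
      simp only [List.mem_map] at hx
      obtain ⟨y, hy, rfl⟩ := hx
      have := hmem y (by simp [hy]); omega
    set r₁ : ℕ := if a % 2 = 1 then 1 else 2 with hr₁
    set r₂ : ℕ := if (a + 1) % 2 = 1 then 1 else 2 with hr₂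
    have hp₁ : a % 2 = r₁ % 2 := by rw [hr₁]; split_ifs <;> omega
    have hp₂ : (a + 1) % 2 = r₂ % 2 := by rw [hr₂]; split_ifs <;> omega
    have hr₁₂ : r₁ + r₂ = 3 := by rw [hr₁, hr₂]; split_ifs <;> omega
    by_cases hc : r₁ + inc a w ≤ k
    · left
      exact emb (by rw [hr₁]; split_ifs <;> omega) hp₁ ha1 (by omega) hw hc
    · right
      have hinc2 : inc (a + 1) (w.map (· + 1)) = 2 * w.length - inc a w := by omega
      show ((a + 1) :: w.map (· + 1)).Sublist (zz k (k + 1))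
      refine emb (r := r₂) (by rw [hr₂]; split_ifs <;> omega) hp₂ (by omega) (by omega) hw' ?_
      omega
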